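/- Let M_1, …, M_k be matroids on the same finite ground set E, let A ⊆ E, and for each i let U_i ⊆ A be independent in M_i. If the contracted matroids M_1/A, …, M_k/A satisfy the rank condition that the sum over i of the rank of B in M_i/A is at least |B| for every B ⊆ E \ A, then the contracted matroids M_1/U_1, …, M_k/U_k also satisfy: for every B ⊆ E \ A, the sum over i of the rank of B in M_i/U_i is at least |B|. Consequently, there exist sets U'_1, …, U'_k ⊆ E \ A with U'_1 ∪ … ∪ U'_k = E \ A such that U'_i is independent in M_i/U_i for each i. -/

import Mathlib

/-- The rank of a set `A` in the matroid `M`: the largest cardinality of an independent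
subset of `A`. -/
noncomputable def rankFun {α : Type*} (M : Matroid α) (A : Set α) : ℕ :=
  sSup {n : ℕ | ∃ I, I ⊆ A ∧ M.Indep I ∧ I.ncard = n}

/-- `I` is independent in the contraction `M/A` (the matroid on `M.E \ A` whose rank
function is `B ↦ rankFun M (A ∪ B) - rankFun M A`): that is, `I ⊆ M.E \ A` and the rank of
`I` in `M/A` equals its cardinality. -/
def IndepInContract {α : Type*} (M : Matroid α) (A I : Set α) : Prop :=
  I ⊆ M.E \ A ∧ rankFun M (A ∪ I) = rankFun M A + I.ncard

section RankAux

open Set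

variable {α : Type*} {M : Matroid α} {X Y W I J : Set α} {e : α}

lemma indep_finite' (hfin : M.E.Finite) (hI : M.Indep I) : I.Finite :=
  hfin.subset hI.subset_ground

lemma rankFun_isGreatest (hfin : M.E.Finite) (hI : M.IsBasis' I X) :
    IsGreatest {n : ℕ | ∃ J, J ⊆ X ∧ M.Indep J ∧ J.ncard = n} I.ncard := by
  constructor
  · exact ⟨I, hI.subset, hI.indep, rfl⟩
  · rintro n ⟨J, hJX, hJ, rfl⟩
    obtain ⟨I', hI', hJI'⟩ := hJ.subset_isBasis'_of_subset hJX
    have h1 : J.ncard ≤ I'.ncard := ncard_le_ncard hJI' (indep_finite' hfin hI'.indep)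
    have h3 : I'.ncard = I.ncard := by
      rw [Set.ncard_def, Set.ncard_def, hI'.encard_eq_encard hI]
    omega

lemma rankFun_basis' (hfin : M.E.Finite) (hI : M.IsBasis' I X) : rankFun M X = I.ncard :=
  (rankFun_isGreatest hfin hI).csSup_eq

lemma ncard_le_rankFun (hfin : M.E.Finite) (hJ : M.Indep J) (hJX : J ⊆ X) :
    J.ncard ≤ rankFun M X := by
  obtain ⟨I, hI⟩ := M.exists_isBasis' X
  rw [rankFun_basis' hfin hI]
  exact (rankFun_isGreatest hfin hI).2 ⟨J, hJX, hJ, rfl⟩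

lemma rankFun_indep (hfin : M.E.Finite) (hI : M.Indep I) : rankFun M I = I.ncard :=
  rankFun_basis' hfin hI.isBasis_self.isBasis'

lemma rankFun_mono (hfin : M.E.Finite) (hXY : X ⊆ Y) : rankFun M X ≤ rankFun M Y := by
  obtain ⟨I, hI⟩ := M.exists_isBasis' X
  rw [rankFun_basis' hfin hI]
  exact ncard_le_rankFun hfin hI.indep (hI.subset.trans hXY)

lemma rankFun_le_ncard (hfin : M.E.Finite) (hX : X.Finite) : rankFun M X ≤ X.ncard := by
  obtain ⟨I, hI⟩ := M.exists_isBasis' X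
  rw [rankFun_basis' hfin hI]
  exact ncard_le_ncard hI.subset hX

lemma indep_of_rankFun (hfin : M.E.Finite) (hX : X ⊆ M.E) (h : rankFun M X = X.ncard) :
    M.Indep X := by
  obtain ⟨I, hI⟩ := M.exists_isBasis' X
  have hXfin : X.Finite := hfin.subset hX
  have hIX : I = X :=
    eq_of_subset_of_ncard_le hI.subset (by rw [← h, rankFun_basis' hfin hI]) hXfin
  exact hIX ▸ hI.indep

lemma rankFun_submod (hfin : M.E.Finite) (hX : X ⊆ M.E) (hY : Y ⊆ M.E) :
    rankFun M (X ∪ Y) + rankFun M (X ∩ Y) ≤ rankFun M X + rankFun M Y := by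
  obtain ⟨I, hI⟩ := M.exists_isBasis (X ∩ Y) (inter_subset_left.trans hX)
  obtain ⟨J, hJ, hJI⟩ := hI.exists_isBasis_inter_eq_of_superset
    (inter_subset_left.trans subset_union_left) (union_subset hX hY)
  have hJfin : J.Finite := indep_finite' hfin hJ.indep
  have hrXY : rankFun M (X ∪ Y) = J.ncard := rankFun_basis' hfin hJ.isBasis'
  have hrI : rankFun M (X ∩ Y) = I.ncard := rankFun_basis' hfin hI.isBasis'
  have h1 : (J ∩ X).ncard ≤ rankFun M X :=
    ncard_le_rankFun hfin (hJ.indep.subset inter_subset_left) inter_subset_right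
  have h2 : (J ∩ Y).ncard ≤ rankFun M Y :=
    ncard_le_rankFun hfin (hJ.indep.subset inter_subset_left) inter_subset_right
  have hu : (J ∩ X) ∪ (J ∩ Y) = J := by
    rw [← inter_union_distrib_left, inter_eq_left.2 hJ.subset]
  have hi : (J ∩ X) ∩ (J ∩ Y) = I := by
    rw [← inter_inter_distrib_left, hJI]
  have hcard := ncard_union_add_ncard_inter (J ∩ X) (J ∩ Y)
    (hJfin.subset inter_subset_left) (hJfin.subset inter_subset_left)
  rw [hu, hi] at hcard
  omega

lemma rankFun_insert_le (hfin : M.E.Finite) (hX : X ⊆ M.E) (he : e ∈ M.E) :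
    rankFun M (insert e X) ≤ rankFun M X + 1 := by
  have h := rankFun_submod hfin hX (singleton_subset_iff.2 he)
  have h1 : rankFun M {e} ≤ 1 := by
    simpa using rankFun_le_ncard (M := M) hfin (finite_singleton e)
  rw [union_singleton] at h
  omega

lemma rank_union_eq_of_closure (hfin : M.E.Finite) (hX : X ⊆ M.E) (hY : Y ⊆ M.E)
    (hW : W ⊆ M.E) (hXY : X ⊆ Y) (h : rankFun M (X ∪ W) = rankFun M X) :
    rankFun M (Y ∪ W) = rankFun M Y := by
  have hs := rankFun_submod hfin hY (union_subset hX hW)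
  have h1 : Y ∪ (X ∪ W) = Y ∪ W := by
    rw [← union_assoc, union_eq_self_of_subset_right hXY]
  have h3 : rankFun M X ≤ rankFun M (Y ∩ (X ∪ W)) :=
    rankFun_mono hfin (subset_inter hXY subset_union_left)
  have h4 : rankFun M Y ≤ rankFun M (Y ∪ W) := rankFun_mono hfin subset_union_left
  rw [h1] at hs
  omega

lemma sum_sub_add' {k : ℕ} (a b : Fin k → ℕ) (h : ∀ i, b i ≤ a i) :
    ∑ i, (a i - b i) + ∑ i, b i = ∑ i, a i := by
  rw [← Finset.sum_add_distrib]
  exact Finset.sum_congr rfl fun i _ => Nat.sub_add_cancel (h i)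

end RankAux

open Set

lemma cover_aux {α : Type*} {k : ℕ} (M : Fin k → Matroid α) (E : Set α) (hE : E.Finite)
    (hground : ∀ i, (M i).E = E) :
    ∀ n (S : Set α) (V : Fin k → Set α), S.ncard = n → S ⊆ E → (∀ i, V i ⊆ E \ S) →
      (∀ i, (M i).Indep (V i)) →
      (∀ B ⊆ S, B.ncard + ∑ i, rankFun (M i) (V i) ≤ ∑ i, rankFun (M i) (V i ∪ B)) →
      ∃ I : Fin k → Set α, (∀ i, I i ⊆ S) ∧ (⋃ i, I i = S) ∧
        ∀ i, rankFun (M i) (V i ∪ I i) = rankFun (M i) (V i) + (I i).ncard := by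
  have hfin : ∀ i, (M i).E.Finite := fun i => by rw [hground i]; exact hE
  intro n
  induction n with
  | zero =>
    intro S V hS hSE _ _ _
    have hSfin : S.Finite := hE.subset hSE
    have hSempty : S = ∅ := (ncard_eq_zero hSfin).1 hS
    subst hSempty
    exact ⟨fun _ => ∅, fun _ => Subset.rfl, by simp, fun i => by simp⟩
  | succ n ih =>
    intro S V hS hSE hVES hVindep hcond
    have hSfin : S.Finite := hE.subset hSE
    obtain ⟨e, heS⟩ : S.Nonempty := nonempty_of_ncard_ne_zero (by omega)
    have heE : e ∈ E := hSE heS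
    set S' := S \ {e} with hS'def
    have hS'S : S' ⊆ S := diff_subset
    have hS'card : S'.ncard = n := by
      have h := ncard_diff_singleton_of_mem heS
      rw [hS'def]
      omega
    have hVE : ∀ i, V i ⊆ (M i).E := fun i => by
      rw [hground i]; exact (hVES i).trans diff_subset
    have hsubE : ∀ (j : Fin k) (B : Set α), B ⊆ S → V j ∪ B ⊆ (M j).E := fun j B hB => by
      rw [hground j]; exact union_subset ((hVES j).trans diff_subset) (hB.trans hSE)
    have claim : ∃ i, rankFun (M i) (insert e (V i)) = rankFun (M i) (V i) + 1 ∧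
        ∀ B ⊆ S', B.ncard + ∑ j, rankFun (M j) (V j) + 1 ≤
          (∑ j ∈ Finset.univ.erase i, rankFun (M j) (V j ∪ B)) +
            rankFun (M i) (insert e (V i) ∪ B) := by
      by_contra hcon
      push_neg at hcon
      have key : ∀ i, ∃ T, T ⊆ S' ∧
          (∑ j, rankFun (M j) (V j ∪ T)) = T.ncard + ∑ j, rankFun (M j) (V j) ∧
          rankFun (M i) (V i ∪ T ∪ {e}) = rankFun (M i) (V i ∪ T) := by
        intro i
        by_cases h1 : rankFun (M i) (insert e (V i)) = rankFun (M i) (V i) + 1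
        · obtain ⟨B, hBS', hlt⟩ := hcon i h1
          have hBS : B ⊆ S := hBS'.trans hS'S
          have hins : insert e (V i) ∪ B = V i ∪ B ∪ {e} := by
            rw [insert_union, union_singleton]
          have hmono : rankFun (M i) (V i ∪ B) ≤ rankFun (M i) (insert e (V i) ∪ B) :=
            rankFun_mono (hfin i) (union_subset_union_left _ (subset_insert _ _))
          have hsplit : ∑ j, rankFun (M j) (V j ∪ B) =
              rankFun (M i) (V i ∪ B) +
                ∑ j ∈ Finset.univ.erase i, rankFun (M j) (V j ∪ B) :=
            (Finset.add_sum_erase _ (fun j => rankFun (M j) (V j ∪ B))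
              (Finset.mem_univ i)).symm
          have hge := hcond B hBS
          exact ⟨B, hBS', by omega, by rw [← hins]; omega⟩
        · refine ⟨∅, empty_subset _, by simp, ?_⟩
          have h2 : rankFun (M i) (V i) ≤ rankFun (M i) (insert e (V i)) :=
            rankFun_mono (hfin i) (subset_insert _ _)
          have h3 : rankFun (M i) (insert e (V i)) ≤ rankFun (M i) (V i) + 1 :=
            rankFun_insert_le (hfin i) (hVE i) (by rw [hground i]; exact heE)
          simp only [union_empty, union_singleton]
          omega
      choose T hT1 hT2 hT3 using key
      have tight_union : ∀ T1 T2 : Set α, T1 ⊆ S' → T2 ⊆ S' →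
          (∑ j, rankFun (M j) (V j ∪ T1)) = T1.ncard + ∑ j, rankFun (M j) (V j) →
          (∑ j, rankFun (M j) (V j ∪ T2)) = T2.ncard + ∑ j, rankFun (M j) (V j) →
          (∑ j, rankFun (M j) (V j ∪ (T1 ∪ T2))) =
            (T1 ∪ T2).ncard + ∑ j, rankFun (M j) (V j) := by
        intro T1 T2 h1 h2 ht1 ht2
        have hT1fin : T1.Finite := hSfin.subset (h1.trans hS'S)
        have hT2fin : T2.Finite := hSfin.subset (h2.trans hS'S)
        have hsub : ∀ j ∈ Finset.univ (α := Fin k),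
            rankFun (M j) (V j ∪ (T1 ∪ T2)) + rankFun (M j) (V j ∪ (T1 ∩ T2)) ≤
            rankFun (M j) (V j ∪ T1) + rankFun (M j) (V j ∪ T2) := by
          intro j _
          have hs := rankFun_submod (M := M j) (hfin j)
            (hsubE j T1 (h1.trans hS'S)) (hsubE j T2 (h2.trans hS'S))
          rwa [← union_union_distrib_left, ← union_inter_distrib_left] at hs
        have hsum := Finset.sum_le_sum hsub
        rw [Finset.sum_add_distrib, Finset.sum_add_distrib] at hsum
        have hlow2 := hcond (T1 ∩ T2)
          ((inter_subset_left.trans h1).trans hS'S)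
        have hcard := ncard_union_add_ncard_inter T1 T2 hT1fin hT2fin
        have hlow1 := hcond (T1 ∪ T2) (union_subset (h1.trans hS'S) (h2.trans hS'S))
        omega
      have bigT : ∀ s : Finset (Fin k), (⋃ i ∈ s, T i) ⊆ S' ∧
          (∑ j, rankFun (M j) (V j ∪ (⋃ i ∈ s, T i))) =
            (⋃ i ∈ s, T i).ncard + ∑ j, rankFun (M j) (V j) := by
        intro s
        induction s using Finset.induction_on with
        | empty => simp
        | @insert a s ha ihs =>
          rw [Finset.set_biUnion_insert]
          exact ⟨union_subset (hT1 a) ihs.1,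
            tight_union _ _ (hT1 a) ihs.1 (hT2 a) ihs.2⟩
      obtain ⟨hTstarS', hTstarTight⟩ := bigT Finset.univ
      set Tstar := ⋃ i ∈ Finset.univ, T i with hTstardef
      have hTstarFin : Tstar.Finite := hSfin.subset (hTstarS'.trans hS'S)
      have hb : ∀ i, rankFun (M i) (V i ∪ Tstar ∪ {e}) = rankFun (M i) (V i ∪ Tstar) := by
        intro i
        refine rank_union_eq_of_closure (hfin i)
          (hsubE i (T i) ((hT1 i).trans hS'S))
          (hsubE i Tstar (hTstarS'.trans hS'S))
          (by rw [hground i]; exact singleton_subset_iff.2 heE)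
          (union_subset_union_right _ (Set.subset_biUnion_of_mem (Finset.mem_univ i)))
          (hT3 i)
      have heT : e ∉ Tstar := fun h => (hTstarS' h).2 rfl
      have hfinal := hcond (Tstar ∪ {e})
        (union_subset (hTstarS'.trans hS'S) (singleton_subset_iff.2 heS))
      have hcardT : (Tstar ∪ {e}).ncard = Tstar.ncard + 1 := by
        rw [union_singleton, ncard_insert_of_notMem heT hTstarFin]
      have hsum : ∑ j, rankFun (M j) (V j ∪ (Tstar ∪ {e})) =
          ∑ j, rankFun (M j) (V j ∪ Tstar) := by
        refine Finset.sum_congr rfl fun j _ => ?_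
        rw [← union_assoc]
        exact hb j
      omega
    obtain ⟨i, hri, hcond'⟩ := claim
    set V' : Fin k → Set α := Function.update V i (insert e (V i)) with hV'def
    have hV'i : V' i = insert e (V i) := Function.update_self i _ V
    have hV'j : ∀ j, j ≠ i → V' j = V j := fun j hj => Function.update_of_ne hj _ _
    have heV : e ∉ V i := fun h => (hVES i h).2 heS
    have hV'sub : ∀ j, V' j ⊆ E \ S' := by
      intro j
      by_cases hj : j = i
      · subst hj
        rw [hV'i]
        exact insert_subset ⟨heE, fun h => h.2 rfl⟩
          ((hVES j).trans (diff_subset_diff_right hS'S))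
      · rw [hV'j j hj]
        exact (hVES j).trans (diff_subset_diff_right hS'S)
    have hV'indep : ∀ j, (M j).Indep (V' j) := by
      intro j
      by_cases hj : j = i
      · subst hj
        rw [hV'i]
        refine indep_of_rankFun (hfin j) (by rw [hground j]; exact insert_subset heE ((hVES j).trans diff_subset)) ?_
        rw [hri, rankFun_indep (hfin j) (hVindep j),
          ncard_insert_of_notMem heV (indep_finite' (hfin j) (hVindep j))]
      · rw [hV'j j hj]
        exact hVindep j
    have hcondIH : ∀ B ⊆ S', B.ncard + ∑ j, rankFun (M j) (V' j) ≤
        ∑ j, rankFun (M j) (V' j ∪ B) := by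
      intro B hB
      have e1 : ∑ j, rankFun (M j) (V' j) = rankFun (M i) (insert e (V i)) +
          ∑ j ∈ Finset.univ.erase i, rankFun (M j) (V j) := by
        rw [← Finset.add_sum_erase _ (fun j => rankFun (M j) (V' j)) (Finset.mem_univ i), hV'i]
        exact congrArg _ (Finset.sum_congr rfl fun j hj => by
          rw [hV'j j (Finset.ne_of_mem_erase hj)])
      have e2 : ∑ j, rankFun (M j) (V' j ∪ B) = rankFun (M i) (insert e (V i) ∪ B) +
          ∑ j ∈ Finset.univ.erase i, rankFun (M j) (V j ∪ B) := by
        rw [← Finset.add_sum_erase _ (fun j => rankFun (M j) (V' j ∪ B))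
          (Finset.mem_univ i), hV'i]
        exact congrArg _ (Finset.sum_congr rfl fun j hj => by
          rw [hV'j j (Finset.ne_of_mem_erase hj)])
      have e3 : rankFun (M i) (V i) + ∑ j ∈ Finset.univ.erase i, rankFun (M j) (V j) =
          ∑ j, rankFun (M j) (V j) :=
        Finset.add_sum_erase _ (fun j => rankFun (M j) (V j)) (Finset.mem_univ i)
      have h4 := hcond' B hB
      omega
    obtain ⟨I', hI'sub, hI'union, hI'rank⟩ :=
      ih S' V' hS'card (hS'S.trans hSE) hV'sub hV'indep hcondIH
    set I : Fin k → Set α := Function.update I' i (insert e (I' i)) with hIdef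
    have hIi : I i = insert e (I' i) := Function.update_self i _ I'
    have hIj : ∀ j, j ≠ i → I j = I' j := fun j hj => Function.update_of_ne hj _ _
    have hIS : ∀ j, I j ⊆ S := by
      intro j
      by_cases hj : j = i
      · subst hj
        rw [hIi]
        exact insert_subset heS ((hI'sub j).trans hS'S)
      · rw [hIj j hj]
        exact (hI'sub j).trans hS'S
    refine ⟨I, hIS, ?_, ?_⟩
    · apply Subset.antisymm (iUnion_subset hIS)
      intro x hx
      by_cases hx' : x = e
      · subst hx'
        exact mem_iUnion.2 ⟨i, by rw [hIi]; exact mem_insert _ _⟩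
      · have hxS' : x ∈ S' := ⟨hx, hx'⟩
        rw [← hI'union] at hxS'
        obtain ⟨j, hj⟩ := mem_iUnion.1 hxS'
        refine mem_iUnion.2 ⟨j, ?_⟩
        by_cases hji : j = i
        · subst hji
          rw [hIi]
          exact mem_insert_of_mem _ hj
        · rwa [hIj j hji]
    · intro j
      by_cases hj : j = i
      · subst hj
        rw [hIi]
        have h1 : V j ∪ insert e (I' j) = insert e (V j) ∪ I' j := by
          rw [union_insert, insert_union]
        have heI' : e ∉ I' j := fun h => (hI'sub j h).2 rfl
        have hVrank := hI'rank j
        rw [hV'i] at hVrank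
        have hI'fin : (I' j).Finite := hSfin.subset ((hI'sub j).trans hS'S)
        rw [h1, hVrank, hri, ncard_insert_of_notMem heI' hI'fin]
        omega
      · rw [hIj j hj]
        have h := hI'rank j
        rwa [hV'j j hj] at h

/-- Let `A ⊆ E` and for each `i` let `U i ⊆ A` be independent in `M i`. If the contractions
`M i / A` satisfy the rank condition `∑ i, (rᵢ(A ∪ B) - rᵢ(A)) ≥ |B|` for every
`B ⊆ E \ A`, then so do the contractions `M i / U i`, in the sense that
`∑ i, (rᵢ(U i ∪ B) - rᵢ(U i)) ≥ |B|` for every `B ⊆ E \ A`; consequently `E \ A` is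
covered by sets `U' i ⊆ E \ A` with `U' i` independent in `M i / U i` for each `i`. -/
theorem contract_indep_cover {α : Type*} {k : ℕ} (M : Fin k → Matroid α) (E : Set α)
    (hE : E.Finite) (hground : ∀ i, (M i).E = E)
    (A : Set α) (hA : A ⊆ E)
    (U : Fin k → Set α) (hUA : ∀ i, U i ⊆ A) (hU : ∀ i, (M i).Indep (U i))
    (hrank : ∀ B ⊆ E \ A, B.ncard ≤ ∑ i, (rankFun (M i) (A ∪ B) - rankFun (M i) A)) :
    (∀ B ⊆ E \ A, B.ncard ≤ ∑ i, (rankFun (M i) (U i ∪ B) - rankFun (M i) (U i))) ∧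
      ∃ U' : Fin k → Set α, (∀ i, U' i ⊆ E \ A) ∧ (⋃ i, U' i = E \ A) ∧
        ∀ i, IndepInContract (M i) (U i) (U' i) := by
  have hfin : ∀ i, (M i).E.Finite := fun i => by rw [hground i]; exact hE
  have hUE : ∀ i, U i ⊆ E := fun i => (hUA i).trans hA
  have hkey : ∀ B ⊆ E \ A, ∀ i : Fin k,
      rankFun (M i) (A ∪ B) + rankFun (M i) (U i) ≤
        rankFun (M i) A + rankFun (M i) (U i ∪ B) := by
    intro B hB i
    have hBE : B ⊆ E := hB.trans diff_subset
    have hs := rankFun_submod (M := M i) (hfin i) (X := A) (Y := U i ∪ B)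
      (by rw [hground i]; exact hA)
      (by rw [hground i]; exact union_subset (hUE i) hBE)
    have h1 : A ∪ (U i ∪ B) = A ∪ B := by
      rw [← union_assoc, union_eq_self_of_subset_right (hUA i)]
    have h2 : rankFun (M i) (U i) ≤ rankFun (M i) (A ∩ (U i ∪ B))  :=
      rankFun_mono (hfin i) (subset_inter (hUA i) subset_union_left)
    rw [h1] at hs
    omega
  have hmono2 : ∀ (B : Set α) (i : Fin k),
      rankFun (M i) (U i) ≤ rankFun (M i) (U i ∪ B) :=
    fun B i => rankFun_mono (hfin i) subset_union_left
  have part1 : ∀ B ⊆ E \ A, B.ncard ≤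
      ∑ i, (rankFun (M i) (U i ∪ B) - rankFun (M i) (U i)) := by
    intro B hB
    refine (hrank B hB).trans (Finset.sum_le_sum fun i _ => ?_)
    have h1 := hkey B hB i
    have h2 : rankFun (M i) A ≤ rankFun (M i) (A ∪ B) :=
      rankFun_mono (hfin i) subset_union_left
    have h3 := hmono2 B i
    omega
  refine ⟨part1, ?_⟩
  have hcond : ∀ B ⊆ E \ A, B.ncard + ∑ i, rankFun (M i) (U i) ≤
      ∑ i, rankFun (M i) (U i ∪ B) := by
    intro B hB
    have h := part1 B hB
    have hs : ∑ i, (rankFun (M i) (U i ∪ B) - rankFun (M i) (U i)) +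
        ∑ i, rankFun (M i) (U i) = ∑ i, rankFun (M i) (U i ∪ B) :=
      sum_sub_add' _ _ (fun i => hmono2 B i)
    omega
  have hUsub : ∀ i, U i ⊆ E \ (E \ A) := by
    intro i x hx
    exact ⟨hUE i hx, fun h => h.2 (hUA i hx)⟩
  obtain ⟨U', h1, h2, h3⟩ := cover_aux M E hE hground ((E \ A).ncard) (E \ A) U rfl
    diff_subset hUsub hU hcond
  refine ⟨U', h1, h2, fun i => ⟨?_, h3 i⟩⟩
  rw [hground i]
  exact (h1 i).trans (diff_subset_diff_right (hUA i))
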